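/- Let K be a field. The Jacobson radical of the ring C_K equals t·M₂(K(t)₀), that is, the set of matrices in M₂(K(t)) all of whose entries lie in t·K(t)₀. (This is established in the proof of Theorem 9.1.) -/

import Mathlib

/-- `x ∈ K(t)₀`: `x` is expressible as `p/q` with polynomials `p, q` such that
`q(0) ≠ 0`. -/
def InK0 (K : Type*) [Field K] (x : RatFunc K) : Prop :=
  ∃ p q : Polynomial K, q.eval 0 ≠ 0 ∧
    x = algebraMap (Polynomial K) (RatFunc K) p / algebraMap (Polynomial K) (RatFunc K) q

section Lemmas

variable {K : Type*} [Field K]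

theorem inK0_zero : InK0 K 0 := ⟨0, 1, by simp, by simp⟩

theorem inK0_one : InK0 K 1 := ⟨1, 1, by simp, by simp⟩

theorem inK0_add {x y : RatFunc K} (hx : InK0 K x) (hy : InK0 K y) : InK0 K (x + y) := by
  obtain ⟨p₁, q₁, h₁, rfl⟩ := hx
  obtain ⟨p₂, q₂, h₂, rfl⟩ := hy
  have hq₁ : q₁ ≠ 0 := fun h => h₁ (by simp [h])
  have hq₂ : q₂ ≠ 0 := fun h => h₂ (by simp [h])
  refine ⟨p₁ * q₂ + q₁ * p₂, q₁ * q₂, by simp [h₁, h₂], ?_⟩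
  rw [div_add_div _ _ (by simpa using hq₁) (by simpa using hq₂)]
  simp [map_mul, map_add]

theorem inK0_neg {x : RatFunc K} (hx : InK0 K x) : InK0 K (-x) := by
  obtain ⟨p, q, h, rfl⟩ := hx
  exact ⟨-p, q, h, by rw [map_neg, neg_div]⟩

theorem inK0_mul {x y : RatFunc K} (hx : InK0 K x) (hy : InK0 K y) : InK0 K (x * y) := by
  obtain ⟨p₁, q₁, h₁, rfl⟩ := hx
  obtain ⟨p₂, q₂, h₂, rfl⟩ := hy
  exact ⟨p₁ * p₂, q₁ * q₂, by simp [h₁, h₂], by rw [div_mul_div_comm, map_mul, map_mul]⟩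

end Lemmas

/-- `C_K`: the subring of `M₂(K(t))` consisting of matrices whose diagonal entries lie
in `K(t)₀` and whose off-diagonal entries lie in `t·K(t)₀`. -/
def CK (K : Type*) [Field K] : Subring (Matrix (Fin 2) (Fin 2) (RatFunc K)) where
  carrier := {m | (∀ i j, InK0 K (m i j)) ∧
    ∀ i j, i ≠ j → ∃ y : RatFunc K, InK0 K y ∧ m i j = RatFunc.X * y}
  zero_mem' := ⟨fun i j => by simpa using inK0_zero,
    fun i j hij => ⟨0, inK0_zero, by simp⟩⟩
  one_mem' := by
    refine ⟨fun i j => ?_, fun i j hij => ⟨0, inK0_zero, by simp [Matrix.one_apply_ne hij]⟩⟩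
    by_cases h : i = j
    · subst h; simpa [Matrix.one_apply_eq] using inK0_one
    · simpa [Matrix.one_apply_ne h] using inK0_zero
  add_mem' := by
    rintro a b ⟨ha₁, ha₂⟩ ⟨hb₁, hb₂⟩
    refine ⟨fun i j => by simpa [Matrix.add_apply] using inK0_add (ha₁ i j) (hb₁ i j),
      fun i j hij => ?_⟩
    obtain ⟨y₁, hy₁, e₁⟩ := ha₂ i j hij
    obtain ⟨y₂, hy₂, e₂⟩ := hb₂ i j hij
    exact ⟨y₁ + y₂, inK0_add hy₁ hy₂, by simp [Matrix.add_apply, e₁, e₂, mul_add]⟩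
  neg_mem' := by
    rintro a ⟨ha₁, ha₂⟩
    refine ⟨fun i j => by simpa [Matrix.neg_apply] using inK0_neg (ha₁ i j),
      fun i j hij => ?_⟩
    obtain ⟨y, hy, e⟩ := ha₂ i j hij
    exact ⟨-y, inK0_neg hy, by simp [Matrix.neg_apply, e]⟩
  mul_mem' := by
    rintro a b ⟨ha₁, ha₂⟩ ⟨hb₁, hb₂⟩
    have key : ∀ (i j : Fin 2), i ≠ j →
        ∀ f : Fin 2 → RatFunc K, ∑ k, f k = f i + f j := by
      intro i j hij f
      fin_cases i <;> fin_cases j <;> simp_all [Fin.sum_univ_two, add_comm]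
    refine ⟨fun i j => ?_, fun i j hij => ?_⟩
    · rw [Matrix.mul_apply, Fin.sum_univ_two]
      exact inK0_add (inK0_mul (ha₁ i 0) (hb₁ 0 j)) (inK0_mul (ha₁ i 1) (hb₁ 1 j))
    · obtain ⟨y₁, hy₁, e₁⟩ := ha₂ i j hij
      obtain ⟨y₂, hy₂, e₂⟩ := hb₂ i j hij
      rw [Matrix.mul_apply, key i j hij]
      refine ⟨a i i * y₂ + y₁ * b j j,
        inK0_add (inK0_mul (ha₁ i i) hy₂) (inK0_mul hy₁ (hb₁ j j)), ?_⟩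
      rw [e₁, e₂]; ring

section MyAux

variable {K : Type*} [Field K]

/-- `x ∈ t·K(t)₀`. -/
def TK (K : Type*) [Field K] (x : RatFunc K) : Prop :=
  ∃ y : RatFunc K, InK0 K y ∧ x = RatFunc.X * y

theorem mem_CK_iff {m : Matrix (Fin 2) (Fin 2) (RatFunc K)} :
    m ∈ CK K ↔ (∀ i j, InK0 K (m i j)) ∧
      ∀ i j, i ≠ j → ∃ y : RatFunc K, InK0 K y ∧ m i j = RatFunc.X * y :=
  Iff.rfl

theorem inK0_X_mul {y : RatFunc K} (hy : InK0 K y) : InK0 K (RatFunc.X * y) := by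
  obtain ⟨p, q, h, rfl⟩ := hy
  exact ⟨Polynomial.X * p, q, h, by rw [map_mul, RatFunc.algebraMap_X, mul_div_assoc]⟩

theorem inK0_of_TK {x : RatFunc K} (hx : TK K x) : InK0 K x := by
  obtain ⟨y, hy, rfl⟩ := hx
  exact inK0_X_mul hy

theorem one_ne_X_mul {y : RatFunc K} (hy : InK0 K y) : (1 : RatFunc K) ≠ RatFunc.X * y := by
  obtain ⟨p, q, h, rfl⟩ := hy
  intro heq
  have hq : q ≠ 0 := fun h0 => h (by simp [h0])
  have hq' : (algebraMap (Polynomial K) (RatFunc K)) q ≠ 0 := by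
    simpa using fun h0 => hq (RatFunc.algebraMap_injective K (by simpa using h0))
  rw [← mul_div_assoc, eq_comm, div_eq_one_iff_eq hq', ← RatFunc.algebraMap_X, ← map_mul] at heq
  have := RatFunc.algebraMap_injective K heq
  apply h
  rw [← this]
  simp

theorem inK0_inv {x : RatFunc K} (hx : InK0 K x) (hT : ¬ TK K x) :
    x ≠ 0 ∧ InK0 K x⁻¹ := by
  obtain ⟨p, q, hq, rfl⟩ := hx
  have hq0 : q ≠ 0 := fun h0 => hq (by simp [h0])
  have hp : p.eval 0 ≠ 0 := by
    intro hp0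
    obtain ⟨p', rfl⟩ : Polynomial.X ∣ p :=
      Polynomial.X_dvd_iff.2 (by rwa [Polynomial.coeff_zero_eq_eval_zero])
    exact hT ⟨algebraMap (Polynomial K) (RatFunc K) p' / algebraMap (Polynomial K) (RatFunc K) q,
      ⟨p', q, hq, rfl⟩, by rw [map_mul, RatFunc.algebraMap_X, mul_div_assoc]⟩
  have hp0 : p ≠ 0 := fun h0 => hp (by simp [h0])
  have hpm : (algebraMap (Polynomial K) (RatFunc K)) p ≠ 0 :=
    fun h0 => hp0 (RatFunc.algebraMap_injective K (by simpa using h0))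
  have hqm : (algebraMap (Polynomial K) (RatFunc K)) q ≠ 0 :=
    fun h0 => hq0 (RatFunc.algebraMap_injective K (by simpa using h0))
  exact ⟨div_ne_zero hpm hqm, by rw [inv_div]; exact ⟨q, p, hp, rfl⟩⟩

theorem TK_entries_mul {a b : Matrix (Fin 2) (Fin 2) (RatFunc K)}
    (ha : ∀ i j, InK0 K (a i j)) (hb : ∀ i j, TK K (b i j)) :
    ∀ i j, TK K ((a * b) i j) := by
  intro i j
  obtain ⟨y₀, hy₀, e₀⟩ := hb 0 j
  obtain ⟨y₁, hy₁, e₁⟩ := hb 1 j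
  refine ⟨a i 0 * y₀ + a i 1 * y₁,
    inK0_add (inK0_mul (ha i 0) hy₀) (inK0_mul (ha i 1) hy₁), ?_⟩
  rw [Matrix.mul_apply, Fin.sum_univ_two, e₀, e₁]; ring

/-- If all entries of `w ∈ C_K` lie in `t·K(t)₀`, then `1 - w` is a unit of `C_K`. -/
theorem isUnit_one_sub {w : CK K} (hw : ∀ i j, TK K ((w : Matrix (Fin 2) (Fin 2) (RatFunc K)) i j)) :
    IsUnit ((1 : CK K) - w) := by
  set m : Matrix (Fin 2) (Fin 2) (RatFunc K) :=
    (((1 : CK K) - w : CK K) : Matrix (Fin 2) (Fin 2) (RatFunc K)) with hm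
  have hmem : (m : Matrix (Fin 2) (Fin 2) (RatFunc K)) ∈ CK K := ((1 : CK K) - w).2
  obtain ⟨hm1, hm2⟩ := mem_CK_iff.1 hmem
  obtain ⟨a, hay, ha⟩ := hw 0 0
  obtain ⟨b, hby, hb⟩ := hw 1 1
  obtain ⟨c, hcy, hc⟩ := hw 0 1
  obtain ⟨e, hey, he⟩ := hw 1 0
  have hw' : (w : Matrix (Fin 2) (Fin 2) (RatFunc K)) = w := rfl
  have hmentry : ∀ i j, m i j = (1 : Matrix (Fin 2) (Fin 2) (RatFunc K)) i j
      - (w : Matrix (Fin 2) (Fin 2) (RatFunc K)) i j := by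
    intro i j; rw [hm]; push_cast; rw [Matrix.sub_apply]
  set d : RatFunc K := m 0 0 * m 1 1 - m 0 1 * m 1 0 with hd
  have hdval : d = 1 - RatFunc.X *
      (a + b - RatFunc.X * (a * b) + RatFunc.X * (c * e)) := by
    rw [hd, hmentry 0 0, hmentry 1 1, hmentry 0 1, hmentry 1 0, ha, hb, hc, he]
    simp [Matrix.one_apply]
    ring
  set s : RatFunc K := a + b - RatFunc.X * (a * b) + RatFunc.X * (c * e) with hs
  have hsK : InK0 K s := by
    rw [hs, sub_eq_add_neg]
    exact inK0_add (inK0_add (inK0_add hay hby) (inK0_neg (inK0_X_mul (inK0_mul hay hby))))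
      (inK0_X_mul (inK0_mul hcy hey))
  have hdK : InK0 K d := by
    rw [hdval, sub_eq_add_neg]
    exact inK0_add inK0_one (inK0_neg (inK0_X_mul hsK))
  have hdT : ¬ TK K d := by
    rintro ⟨y, hy, hxy⟩
    apply one_ne_X_mul (inK0_add hsK hy)
    have : (1 : RatFunc K) = d + RatFunc.X * s := by rw [hdval]; ring
    rw [this, hxy]; ring
  obtain ⟨hd0, hdinv⟩ := inK0_inv hdK hdT
  set m' : Matrix (Fin 2) (Fin 2) (RatFunc K) :=
    !![m 1 1 / d, -(m 0 1) / d; -(m 1 0) / d, m 0 0 / d] with hm'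
  have hmul1 : m * m' = 1 := by
    ext i j
    fin_cases i <;> fin_cases j <;>
      simp [hm', Matrix.mul_apply, Fin.sum_univ_two, Matrix.one_apply] <;>
      field_simp <;> (try simp only [hd]) <;> ring
  have hmul2 : m' * m = 1 := by
    ext i j
    fin_cases i <;> fin_cases j <;>
      simp [hm', Matrix.mul_apply, Fin.sum_univ_two, Matrix.one_apply] <;>
      field_simp <;> (try simp only [hd]) <;> ring
  have hm'mem : m' ∈ CK K := by
    rw [mem_CK_iff]
    constructor
    · intro i j
      fin_cases i <;> fin_cases j <;> simp [hm', div_eq_mul_inv] <;>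
        first
          | exact inK0_mul (hm1 1 1) hdinv
          | exact inK0_neg (inK0_mul (hm1 0 1) hdinv)
          | exact inK0_neg (inK0_mul (hm1 1 0) hdinv)
          | exact inK0_mul (hm1 0 0) hdinv
    · intro i j hij
      have h01 : m 0 1 = -(RatFunc.X * c) := by
        rw [hmentry 0 1, hc]; simp [Matrix.one_apply]
      have h10 : m 1 0 = -(RatFunc.X * e) := by
        rw [hmentry 1 0, he]; simp [Matrix.one_apply]
      fin_cases i <;> fin_cases j
      · exact absurd rfl hij
      · refine ⟨c * d⁻¹, inK0_mul hcy hdinv, ?_⟩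
        have e01 : m' 0 1 = -(m 0 1) / d := by simp [hm']
        show m' 0 1 = _
        rw [e01, h01, neg_neg, div_eq_mul_inv]; ring
      · refine ⟨e * d⁻¹, inK0_mul hey hdinv, ?_⟩
        have e10 : m' 1 0 = -(m 1 0) / d := by simp [hm']
        show m' 1 0 = _
        rw [e10, h10, neg_neg, div_eq_mul_inv]; ring
      · exact absurd rfl hij
  refine ⟨⟨(1 : CK K) - w, ⟨m', hm'mem⟩, Subtype.ext ?_, Subtype.ext ?_⟩, rfl⟩
  · show (((1 : CK K) - w : CK K) : Matrix (Fin 2) (Fin 2) (RatFunc K)) * m' = _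
    rw [← hm]; exact hmul1.trans (by push_cast; rfl)
  · show m' * (((1 : CK K) - w : CK K) : Matrix (Fin 2) (Fin 2) (RatFunc K)) = _
    rw [← hm]; exact hmul2.trans (by push_cast; rfl)

end MyAux

/-- **From the proof of Theorem 9.1.** The Jacobson radical of the ring `C_K`
(the intersection of its maximal left ideals) equals `t·M₂(K(t)₀)`: a member `z` of
`C_K` lies in the Jacobson radical if and only if all of its entries lie in
`t·K(t)₀`. -/
theorem stmt9 {K : Type*} [Field K] (z : CK K) :
    z ∈ Ideal.jacobson (⊥ : Ideal (CK K)) ↔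
      ∀ i j, ∃ y : RatFunc K, InK0 K y ∧
        (z : Matrix (Fin 2) (Fin 2) (RatFunc K)) i j = RatFunc.X * y := by
  constructor
  · -- z ∈ Jacobson radical → all entries in t·K(t)₀
    intro h
    -- left invertibility of 1 - u*z for all u
    have key : ∀ u : CK K, ∃ v : CK K, v * (1 - u * z) = 1 := by
      intro u
      by_contra hcon
      push_neg at hcon
      have hne : Ideal.span {(1 : CK K) - u * z} ≠ ⊤ := by
        intro htop
        obtain ⟨v, hv⟩ := Submodule.mem_span_singleton.1
          (htop ▸ Submodule.mem_top : (1 : CK K) ∈ Ideal.span {(1 : CK K) - u * z})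
        exact hcon v (by rw [← smul_eq_mul]; exact hv)
      obtain ⟨M, hMmax, hle⟩ := Ideal.exists_le_maximal _ hne
      have hzM : z ∈ M := by
        rw [Ideal.jacobson] at h
        exact Ideal.mem_sInf.1 h ⟨bot_le, hMmax⟩
      have h2 : (1 : CK K) - u * z ∈ M := hle (Ideal.subset_span rfl)
      have h3 : u * z ∈ M := by
        have := M.smul_mem u hzM
        rwa [smul_eq_mul] at this
      have h1 : (1 : CK K) ∈ M := by
        have := M.add_mem h2 h3
        rwa [sub_add_cancel] at this
      exact hMmax.ne_top ((Ideal.eq_top_iff_one _).2 h1)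
    obtain ⟨hz1, hz2⟩ := mem_CK_iff.1 z.2
    intro i j
    by_cases hij : i = j
    · subst hij
      by_contra hT
      obtain ⟨hx0, hxinv⟩ := inK0_inv (hz1 i i)
        (fun ⟨y, hy, hxy⟩ => hT ⟨y, hy, hxy⟩)
      set x : RatFunc K := (z : Matrix (Fin 2) (Fin 2) (RatFunc K)) i i with hx
      set u : Matrix (Fin 2) (Fin 2) (RatFunc K) :=
        fun k l => if k = i ∧ l = i then x⁻¹ else 0 with hu
      have huCK : u ∈ CK K := by
        rw [mem_CK_iff]
        constructor
        · intro k l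
          rw [hu]
          dsimp only
          split
          · exact hxinv
          · exact inK0_zero
        · intro k l hkl
          refine ⟨0, inK0_zero, ?_⟩
          rw [hu]
          dsimp only
          rw [if_neg (fun ⟨h1', h2'⟩ => hkl (h1'.trans h2'.symm)), mul_zero]
      obtain ⟨v, hv⟩ := key ⟨u, huCK⟩
      have hv' : (v : Matrix (Fin 2) (Fin 2) (RatFunc K)) *
          (1 - u * (z : Matrix (Fin 2) (Fin 2) (RatFunc K))) = 1 := by
        have := congrArg (Subtype.val (p := (· ∈ CK K))) hv
        push_cast at this
        exact this
      have hcol : ∀ k, ((1 : Matrix (Fin 2) (Fin 2) (RatFunc K))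
          - u * (z : Matrix (Fin 2) (Fin 2) (RatFunc K))) k i = 0 := by
        intro k
        have hsum : (u * (z : Matrix (Fin 2) (Fin 2) (RatFunc K))) k i
            = (if k = i then x⁻¹ else 0) * x := by
          rw [Matrix.mul_apply]
          rw [Finset.sum_eq_single i ?_ (by simp)]
          · rw [hu]; dsimp only
            by_cases hk : k = i <;> simp [hk] <;> exact Or.inl hx.symm
          · intro b _ hb
            rw [hu]; dsimp only
            rw [if_neg (fun hh => hb hh.2), zero_mul]
        rw [Matrix.sub_apply, hsum, Matrix.one_apply]
        by_cases hk : k = i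
        · simp [hk, inv_mul_cancel₀ hx0]
        · simp [hk]
      have := congrFun (congrFun hv' i) i
      rw [Matrix.mul_apply] at this
      simp only [hcol, mul_zero, Finset.sum_const_zero, Matrix.one_apply_eq] at this
      exact zero_ne_one this
    · exact hz2 i j hij
  · -- all entries in t·K(t)₀ → z ∈ Jacobson radical
    intro hz
    rw [Ideal.jacobson]
    rw [Ideal.mem_sInf]
    rintro I ⟨-, hImax⟩
    by_contra hzI
    have hsup : I ⊔ Ideal.span {z} = ⊤ := by
      refine hImax.1.2 _ (lt_of_le_of_ne le_sup_left fun hEq => hzI ?_)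
      rw [hEq]
      exact Submodule.mem_sup_right (Ideal.subset_span rfl)
    obtain ⟨a, haI, b, hb, hab⟩ := Submodule.mem_sup.1
      (hsup ▸ Submodule.mem_top : (1 : CK K) ∈ I ⊔ Ideal.span {z})
    obtain ⟨r, hr⟩ := Submodule.mem_span_singleton.1 hb
    have ha : a = 1 - r * z := by rw [← hab, ← hr, smul_eq_mul, add_sub_cancel_right]
    have hTrz : ∀ i j, TK K (((r * z : CK K) : Matrix (Fin 2) (Fin 2) (RatFunc K)) i j) := by
      have hcoe : ((r * z : CK K) : Matrix (Fin 2) (Fin 2) (RatFunc K))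
          = (r : Matrix (Fin 2) (Fin 2) (RatFunc K)) * z := by push_cast; rfl
      rw [hcoe]
      exact TK_entries_mul (mem_CK_iff.1 r.2).1 hz
    have : IsUnit a := ha ▸ isUnit_one_sub hTrz
    exact hImax.ne_top (Ideal.eq_top_of_isUnit_mem _ haI this)
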